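/- Left coherence of rings is invariant under Morita equivalence: if A and B are rings whose categories of left modules are equivalent (as abelian categories), then A is left coherent if and only if B is left coherent. In particular, if A is left coherent then so is the matrix ring Mat_n(A) for every positive integer n. -/

import Mathlib

open TensorProduct MulOpposite CategoryTheory

universe u v w x

set_option linter.unusedSectionVars false
set_option linter.unusedVariables false

noncomputable section

/-- A ring `A` is *left coherent* if the kernel of any homomorphism between finitely
generated free left `A`-modules is finitely generated. -/
def LeftCoherent (A : Type*) [Ring A] : Prop :=
  ∀ (n m : ℕ) (f : (Fin n → A) →ₗ[A] (Fin m → A)), (LinearMap.ker f).FG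


open CategoryTheory.Limits

lemma isCompactElement_orderIso {α : Type*} {β : Type*} [CompleteLattice α] [CompleteLattice β]
    (e : α ≃o β) {k : α} (h : IsCompactElement k) :
    IsCompactElement (e k) := by
  rw [CompleteLattice.isCompactElement_iff_le_of_directed_sSup_le] at h ⊢
  intro s hne hdir hle
  obtain ⟨x, hx, hkx⟩ := h (e.symm '' s) (hne.image _)
    (by
      rintro _ ⟨x, hx, rfl⟩ _ ⟨y, hy, rfl⟩
      obtain ⟨z, hz, h1, h2⟩ := hdir x hx y hy
      exact ⟨e.symm z, ⟨z, hz, rfl⟩, e.symm.monotone h1, e.symm.monotone h2⟩)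
    (by
      have := e.symm.monotone hle
      simpa [OrderIso.map_sSup] using this)
  obtain ⟨y, hy, rfl⟩ := hx
  exact ⟨y, hy, by simpa using e.monotone hkx⟩

lemma moduleFinite_of_submoduleOrderIso {R : Type*} {S : Type*} [Ring R] [Ring S]
    {M : Type*} {N : Type*} [AddCommGroup M] [Module R M] [AddCommGroup N] [Module S N]
    (e : Submodule R M ≃o Submodule S N) (h : Module.Finite R M) : Module.Finite S N := by
  rw [Module.finite_def, Submodule.fg_iff_compact] at h ⊢
  have := isCompactElement_orderIso e h
  rwa [e.map_top] at this

lemma ker_fg_of_leftCoherent {A : Type u} [Ring A] (hA : LeftCoherent A)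
    {M : Type w} {Q : Type x} [AddCommGroup M] [AddCommGroup Q] [Module A M] [Module A Q]
    [Module.Finite A M] [Module.Projective A Q] [Module.Finite A Q]
    (f : M →ₗ[A] Q) : (LinearMap.ker f).FG := by
  classical
  obtain ⟨k, s, hs⟩ := Module.Finite.exists_fin (R := A) (M := M)
  obtain ⟨l, t, ht⟩ := Module.Finite.exists_fin (R := A) (M := Q)
  let π : (Fin k → A) →ₗ[A] M := (Pi.basisFun A (Fin k)).constr ℕ s
  have hπ : Function.Surjective π := by
    rw [← LinearMap.range_eq_top, Module.Basis.constr_range, hs]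
  let πQ : (Fin l → A) →ₗ[A] Q := (Pi.basisFun A (Fin l)).constr ℕ t
  have hπQ : Function.Surjective πQ := by
    rw [← LinearMap.range_eq_top, Module.Basis.constr_range, ht]
  obtain ⟨sQ, hsQ⟩ := Module.projective_lifting_property πQ LinearMap.id hπQ
  have hsQinj : Function.Injective sQ := by
    intro x y hxy
    have : πQ (sQ x) = πQ (sQ y) := by rw [hxy]
    simpa [← LinearMap.comp_apply, hsQ] using this
  have hker : LinearMap.ker (sQ ∘ₗ f ∘ₗ π) = Submodule.comap π (LinearMap.ker f) := by
    rw [LinearMap.ker_comp, LinearMap.ker_eq_bot.2 hsQinj, Submodule.comap_bot,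
      LinearMap.ker_comp]
  have h1 : (LinearMap.ker (sQ ∘ₗ f ∘ₗ π)).FG := hA k l _
  have h2 := Submodule.FG.map π h1
  rwa [hker, Submodule.map_comap_eq_of_surjective hπ] at h2

def submoduleOrderIsoOfEquiv {A : Type u} {B : Type v} [Ring A] [Ring B]
    (e : ModuleCat.{w} A ≌ ModuleCat.{w} B) (N : ModuleCat.{w} A) :
    Submodule A N ≃o Submodule B (e.functor.obj N) :=
  (ModuleCat.subobjectModule N).symm.trans
    (((Subobject.lowerEquivalence (MonoOver.congr N e)).toOrderIso).trans
      (ModuleCat.subobjectModule (e.functor.obj N)))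

lemma moduleFinite_congr {A : Type u} {B : Type v} [Ring A] [Ring B]
    (e : ModuleCat.{w} A ≌ ModuleCat.{w} B) (N : ModuleCat.{w} A) :
    Module.Finite A N ↔ Module.Finite B (e.functor.obj N) :=
  ⟨moduleFinite_of_submoduleOrderIso (submoduleOrderIsoOfEquiv e N),
   moduleFinite_of_submoduleOrderIso (submoduleOrderIsoOfEquiv e N).symm⟩


/-- Kernels of maps between finite (projective) objects on the other side of a module-category
equivalence are finitely generated, provided the source ring is left coherent. -/
lemma fg_ker_of_equiv {A : Type u} {B : Type v} [Ring A] [Ring B]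
    (E : ModuleCat.{max u v} B ≌ ModuleCat.{max u v} A) (hA : LeftCoherent A)
    (P Q : ModuleCat.{max u v} B) [Module.Finite B P] [Module.Finite B Q]
    (hq : Projective Q) (gc : P ⟶ Q) : (LinearMap.ker (gc.hom : P →ₗ[B] Q)).FG := by
  haveI hFP : Module.Finite A (E.functor.obj P) := (moduleFinite_congr E P).mp inferInstance
  haveI hFQ : Module.Finite A (E.functor.obj Q) := (moduleFinite_congr E Q).mp inferInstance
  haveI hPQA : Projective (E.functor.obj Q) := (E.map_projective_iff Q).mpr hq
  haveI : Module.Projective A (E.functor.obj Q) :=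
    ModuleCat.projective_of_module_projective _
  have hker1 : (LinearMap.ker ((E.functor.map gc).hom : E.functor.obj P →ₗ[A] E.functor.obj Q)).FG :=
    ker_fg_of_leftCoherent hA _
  have h1 : Module.Finite A (LinearMap.ker ((E.functor.map gc).hom :
      E.functor.obj P →ₗ[A] E.functor.obj Q)) := Module.Finite.iff_fg.mpr hker1
  haveI h1' : Module.Finite A
      ↥(ModuleCat.of A ↥(LinearMap.ker ((E.functor.map gc).hom :
        E.functor.obj P →ₗ[A] E.functor.obj Q))) := h1
  have h2 : Module.Finite A ↥((kernel (E.functor.map gc) : ModuleCat.{max u v} A)) :=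
    Module.Finite.equiv (ModuleCat.kernelIsoKer (E.functor.map gc)).symm.toLinearEquiv
  have h3 : Module.Finite A ↥(E.functor.obj (kernel gc)) :=
    Module.Finite.equiv (Limits.PreservesKernel.iso E.functor gc).symm.toLinearEquiv
  have h4 : Module.Finite B ↥((kernel gc : ModuleCat.{max u v} B)) :=
    (moduleFinite_congr E (kernel gc)).mpr h3
  haveI h4' : Module.Finite B ↥((kernel gc : ModuleCat.{max u v} B)) := h4
  have h5 : Module.Finite B ↥(ModuleCat.of B ↥(LinearMap.ker (gc.hom : P →ₗ[B] Q))) :=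
    Module.Finite.equiv (ModuleCat.kernelIsoKer gc).toLinearEquiv
  exact Module.Finite.iff_fg.mp h5

lemma leftCoherent_of_equiv {A : Type u} {B : Type v} [Ring A] [Ring B]
    (e : ModuleCat.{max u v} A ≌ ModuleCat.{max u v} B) (hA : LeftCoherent A) :
    LeftCoherent B := by
  intro n m f
  classical
  let g : ULift.{u} (Fin n → B) →ₗ[B] ULift.{u} (Fin m → B) :=
    ULift.moduleEquiv.symm.toLinearMap ∘ₗ f ∘ₗ ULift.moduleEquiv.toLinearMap
  have hkerg : LinearMap.ker g
      = Submodule.comap (ULift.moduleEquiv.toLinearMap :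
          ULift.{u} (Fin n → B) →ₗ[B] (Fin n → B)) (LinearMap.ker f) := by
    rw [show g = ULift.moduleEquiv.symm.toLinearMap ∘ₗ (f ∘ₗ ULift.moduleEquiv.toLinearMap)
        from rfl,
      LinearMap.ker_comp, LinearMap.ker_eq_bot.2 ULift.moduleEquiv.symm.injective,
      Submodule.comap_bot, LinearMap.ker_comp]
  suffices hfg : (LinearMap.ker g).FG by
    have h2 := Submodule.FG.map
      (ULift.moduleEquiv.toLinearMap : ULift.{u} (Fin n → B) →ₗ[B] (Fin n → B)) hfg
    rw [hkerg] at h2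
    have hr : LinearMap.range
        (ULift.moduleEquiv.toLinearMap : ULift.{u} (Fin n → B) →ₗ[B] (Fin n → B)) = ⊤ :=
      LinearMap.range_eq_top.2 ULift.moduleEquiv.surjective
    have hle : LinearMap.ker f ≤ LinearMap.range
        (ULift.moduleEquiv.toLinearMap : ULift.{u} (Fin n → B) →ₗ[B] (Fin n → B)) := by
      rw [hr]; exact le_top
    rwa [Submodule.map_comap_eq_self hle] at h2
  haveI : Module.Finite B ↥(ModuleCat.of B (ULift.{u} (Fin n → B))) :=
    inferInstanceAs (Module.Finite B (ULift.{u} (Fin n → B)))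
  haveI : Module.Finite B (ULift.{u} (Fin n → B)) := Module.Finite.equiv ULift.moduleEquiv.symm
  haveI : Module.Finite B (ULift.{u} (Fin m → B)) := Module.Finite.equiv ULift.moduleEquiv.symm
  haveI : Module.Finite B ↥(ModuleCat.of B (ULift.{u} (Fin n → B))) :=
    inferInstanceAs (Module.Finite B (ULift.{u} (Fin n → B)))
  haveI : Module.Finite B ↥(ModuleCat.of B (ULift.{u} (Fin m → B))) :=
    inferInstanceAs (Module.Finite B (ULift.{u} (Fin m → B)))
  have hQp : Module.Projective B (ULift.{u} (Fin m → B)) :=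
    Module.Projective.of_basis ((Pi.basisFun B (Fin m)).map ULift.moduleEquiv.symm)
  have hQcat : Projective (ModuleCat.of B (ULift.{u} (Fin m → B))) :=
    (IsProjective.iff_projective _).mp hQp
  exact fg_ker_of_equiv e.symm hA (ModuleCat.of B (ULift.{u} (Fin n → B)))
    (ModuleCat.of B (ULift.{u} (Fin m → B))) hQcat (ModuleCat.ofHom g)

/-- Noncommutative version of `Submodule.FG.of_restrictScalars`. -/
lemma fg_of_fg_restrictScalars (R : Type*) {A M : Type*} [Semiring R] [Semiring A]
    [AddCommMonoid M] [SMul R A] [Module R M] [Module A M] [IsScalarTower R A M]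
    (S : Submodule A M) (hS : (S.restrictScalars R).FG) : S.FG := by
  obtain ⟨s, e⟩ := hS
  refine ⟨s, Submodule.restrictScalars_injective R _ _ (le_antisymm ?_ ?_)⟩
  · show Submodule.span A s ≤ S
    have := Submodule.span_le.mp e.le
    rwa [Submodule.span_le]
  · rw [← e]
    exact Submodule.span_le_restrictScalars _ _ _

lemma leftCoherent_matrix {A : Type u} [Ring A] (hA : LeftCoherent A) (n : ℕ) :
    LeftCoherent (Matrix (Fin n) (Fin n) A) := by
  intro k m f
  haveI : Module.Projective A (Fin m → Matrix (Fin n) (Fin n) A) :=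
    Module.Projective.of_basis (Module.Free.chooseBasis A _)
  apply fg_of_fg_restrictScalars A
  rw [← LinearMap.ker_restrictScalars]
  exact ker_fg_of_leftCoherent hA (f.restrictScalars A)


/-- Left coherence is invariant under Morita equivalence: if the categories of left modules of
two rings are equivalent, then one ring is left coherent iff the other is.  In particular
left coherence passes to matrix rings. -/
theorem leftCoherent_morita_invariant :
    (∀ (A : Type u) (B : Type v) [Ring A] [Ring B],
      (ModuleCat.{max u v} A ≌ ModuleCat.{max u v} B) → (LeftCoherent A ↔ LeftCoherent B)) ∧
    (∀ (A : Type u) [Ring A] (n : ℕ), 0 < n →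
      (LeftCoherent A → LeftCoherent (Matrix (Fin n) (Fin n) A))) := by
  constructor
  · intro A B _ _ e
    exact ⟨fun h => leftCoherent_of_equiv e h, fun h => leftCoherent_of_equiv e.symm h⟩
  · intro A _ n _ hA
    exact leftCoherent_matrix hA n

end
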